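/- Let S be a semigroup with a subsemigroup T such that S \ T is finite. Then S is right noetherian if and only if T is right noetherian. -/

import Mathlib

/-- A right congruence on a semigroup: an equivalence relation compatible with
right multiplication. -/
def IsRightCongruence {S : Type*} [Semigroup S] (r : S → S → Prop) : Prop :=
  Equivalence r ∧ ∀ a b c : S, r a b → r (a * c) (b * c)

/-- A right congruence is finitely generated if it is the least right congruence
containing some finite set of pairs. -/
def IsFGRightCongruence {S : Type*} [Semigroup S] (r : S → S → Prop) : Prop :=
  IsRightCongruence r ∧ ∃ X : Finset (S × S),
    (∀ p ∈ X, r p.1 p.2) ∧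
    ∀ r' : S → S → Prop, IsRightCongruence r' → (∀ p ∈ X, r' p.1 p.2) →
      ∀ a b : S, r a b → r' a b

/-- A semigroup is right noetherian if every right congruence on it is finitely
generated. -/
def RightNoetherian (S : Type*) [Semigroup S] : Prop :=
  ∀ r : S → S → Prop, IsRightCongruence r → IsFGRightCongruence r

/-- A right congruence on a subset `T` of a semigroup (viewed as a subsemigroup):
an equivalence relation on `T` compatible with right multiplication by elements of `T`. -/
def IsRightCongruenceOn {S : Type*} [Semigroup S] (T : Set S) (r : S → S → Prop) : Prop :=
  (∀ a ∈ T, r a a) ∧ (∀ a b : S, r a b → r b a) ∧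
  (∀ a b c : S, r a b → r b c → r a c) ∧
  (∀ a b : S, r a b → a ∈ T ∧ b ∈ T) ∧
  (∀ a b c : S, r a b → c ∈ T → r (a * c) (b * c))

/-- Finite generation of a right congruence on the subsemigroup `T`. -/
def IsFGRightCongruenceOn {S : Type*} [Semigroup S] (T : Set S) (r : S → S → Prop) : Prop :=
  IsRightCongruenceOn T r ∧ ∃ X : Finset (S × S),
    (∀ p ∈ X, r p.1 p.2) ∧
    ∀ r' : S → S → Prop, IsRightCongruenceOn T r' → (∀ p ∈ X, r' p.1 p.2) →
      ∀ a b : S, r a b → r' a b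

/-- The subsemigroup `T` is right noetherian. -/
def RightNoetherianOn {S : Type*} [Semigroup S] (T : Set S) : Prop :=
  ∀ r : S → S → Prop, IsRightCongruenceOn T r → IsFGRightCongruenceOn T r

section RnAux

variable {S : Type*} [Semigroup S]

/-- The `U`-compatible equivalence relation on `S` generated by a set of pairs `A`. -/
inductive RnGen (U : Set S) (A : Set (S × S)) : S → S → Prop
  | base (a b : S) (h : (a, b) ∈ A) : RnGen U A a b
  | refl (a : S) : RnGen U A a a
  | symm {a b : S} (h : RnGen U A a b) : RnGen U A b a
  | trans {a b c : S} (h1 : RnGen U A a b) (h2 : RnGen U A b c) : RnGen U A a c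
  | mul {a b : S} (c : S) (h : RnGen U A a b) (hc : c ∈ U) : RnGen U A (a * c) (b * c)

theorem rnGen_le {U : Set S} {A : Set (S × S)} {r : S → S → Prop}
    (hrefl : ∀ a, r a a) (hsymm : ∀ {a b}, r a b → r b a)
    (htrans : ∀ {a b c}, r a b → r b c → r a c)
    (hmul : ∀ a b c, r a b → c ∈ U → r (a * c) (b * c))
    (hA : ∀ p ∈ A, r p.1 p.2) {x y : S} (h : RnGen U A x y) : r x y := by
  induction h with
  | base a b h => exact hA ⟨a, b⟩ h
  | refl a => exact hrefl a
  | symm h ih => exact hsymm ih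
  | trans h1 h2 ih1 ih2 => exact htrans ih1 ih2
  | mul c h hc ih => exact hmul _ _ c ih hc

theorem rnGen_mono {U : Set S} {A B : Set (S × S)} (hAB : A ⊆ B) {x y : S}
    (h : RnGen U A x y) : RnGen U B x y :=
  rnGen_le RnGen.refl (fun h => h.symm) (fun h1 h2 => h1.trans h2)
    (fun _ _ c h hc => h.mul c hc) (fun p hp => RnGen.base p.1 p.2 (hAB hp)) h

/-- The "boundary translates" of a set of pairs: translate by elements outside `T`. -/
def rnTrans (T : Set S) (A : Set (S × S)) : Set (S × S) :=
  {q | ∃ p ∈ A, ∃ c, c ∉ T ∧ q.1 = p.1 * c ∧ q.2 = p.2 * c}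

theorem rnGen_mul_all {T : Set S} {A : Set (S × S)} {x y : S}
    (h : RnGen T (A ∪ rnTrans T A) x y) : ∀ u : S,
    RnGen T (A ∪ rnTrans T A) (x * u) (y * u) := by
  induction h with
  | base a b h =>
    intro u
    rcases h with h | ⟨p, hp, c, hc, h1, h2⟩
    · by_cases hu : u ∈ T
      · exact (RnGen.base a b (Or.inl h)).mul u hu
      · exact RnGen.base _ _ (Or.inr ⟨(a, b), h, u, hu, rfl, rfl⟩)
    · simp only at h1 h2
      subst h1; subst h2
      rw [mul_assoc, mul_assoc]
      by_cases hcu : c * u ∈ T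
      · exact (RnGen.base p.1 p.2 (Or.inl hp)).mul (c * u) hcu
      · exact RnGen.base _ _ (Or.inr ⟨p, hp, c * u, hcu, rfl, rfl⟩)
  | refl a => exact fun u => RnGen.refl _
  | symm h ih => exact fun u => (ih u).symm
  | trans h1 h2 ih1 ih2 => exact fun u => (ih1 u).trans (ih2 u)
  | mul c h hc ih =>
    intro u
    rw [mul_assoc, mul_assoc]
    exact ih (c * u)

theorem rnGen_univ_le_mixed {T : Set S} {A : Set (S × S)} {x y : S}
    (h : RnGen Set.univ A x y) : RnGen T (A ∪ rnTrans T A) x y :=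
  rnGen_le RnGen.refl (fun h => h.symm) (fun h1 h2 => h1.trans h2)
    (fun _ _ c h _ => rnGen_mul_all h c)
    (fun p hp => RnGen.base p.1 p.2 (Or.inl hp)) h

theorem isRightCongruence_rnGen (A : Set (S × S)) :
    IsRightCongruence (RnGen (Set.univ : Set S) A) :=
  ⟨⟨RnGen.refl, fun h => h.symm, fun h1 h2 => h1.trans h2⟩,
   fun _ _ c h => h.mul c (Set.mem_univ c)⟩

/-- The poset of right congruences on `S`. -/
abbrev RnRCS (S : Type*) [Semigroup S] := {σ : S → S → Prop // IsRightCongruence σ}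

instance : PartialOrder (RnRCS S) where
  le σ τ := ∀ a b, σ.1 a b → τ.1 a b
  le_refl σ := fun _ _ h => h
  le_trans σ τ ρ h1 h2 := fun a b h => h2 a b (h1 a b h)
  le_antisymm σ τ h1 h2 := Subtype.ext (by
    funext a b
    exact propext ⟨h1 a b, h2 a b⟩)

theorem rnRCS_exists_bound (a : ℕ →o RnRCS S) (X : Finset (S × S))
    (hX : ∀ p ∈ X, ∃ n, (a n).1 p.1 p.2) : ∃ N, ∀ p ∈ X, (a N).1 p.1 p.2 := by
  classical
  induction X using Finset.induction_on with
  | empty => exact ⟨0, by simp⟩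
  | @insert q W hq ih =>
    obtain ⟨n, hn⟩ := hX q (Finset.mem_insert_self q W)
    obtain ⟨N, hN⟩ := ih (fun p hp => hX p (Finset.mem_insert_of_mem hp))
    refine ⟨max n N, fun p hp => ?_⟩
    rcases Finset.mem_insert.1 hp with rfl | hp
    · exact a.monotone (le_max_left n N) p.1 p.2 hn
    · exact a.monotone (le_max_right n N) p.1 p.2 (hN p hp)

theorem rnRCS_wf (hS : RightNoetherian S) :
    WellFounded ((· > ·) : RnRCS S → RnRCS S → Prop) := by
  refine @IsWellFounded.wf _ (· > ·) (wellFoundedGT_iff_monotone_chain_condition.2 ?_)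
  intro a
  have hUc : IsRightCongruence (fun x y => ∃ n, (a n).1 x y) := by
    refine ⟨⟨fun x => ⟨0, (a 0).2.1.refl x⟩, ?_, ?_⟩, ?_⟩
    · rintro x y ⟨n, h⟩
      exact ⟨n, (a n).2.1.symm h⟩
    · rintro x y z ⟨n, h1⟩ ⟨m, h2⟩
      exact ⟨max n m, (a (max n m)).2.1.trans
        (a.monotone (le_max_left n m) x y h1) (a.monotone (le_max_right n m) y z h2)⟩
    · rintro x y c ⟨n, h⟩
      exact ⟨n, (a n).2.2 x y c h⟩
  obtain ⟨-, X, hX1, hX2⟩ := hS _ hUc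
  obtain ⟨N, hN⟩ := rnRCS_exists_bound a X (fun p hp => hX1 p hp)
  refine ⟨N, fun m hm => le_antisymm (a.monotone hm) ?_⟩
  intro x y h
  exact hX2 (a N).1 (a N).2 hN x y ⟨m, h⟩

/-- Core lemma (the hard direction): if `S` is right noetherian then every
`T`-compatible equivalence relation on `S` is finitely generated as such. -/
theorem rnKey {T : Set S} (hfin : Tᶜ.Finite) (hS : RightNoetherian S)
    (ν : S → S → Prop) (hrefl : ∀ x, ν x x) (hsymm : ∀ {x y}, ν x y → ν y x)
    (htrans : ∀ {x y z}, ν x y → ν y z → ν x z)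
    (hcomp : ∀ x y c, ν x y → c ∈ T → ν (x * c) (y * c)) :
    ∃ G : Finset (S × S), (∀ p ∈ G, ν p.1 p.2) ∧
      ∀ x y, ν x y → RnGen T (↑G) x y := by
  classical
  suffices h : ∀ σ : RnRCS S, ∀ ν : S → S → Prop, (∀ x, ν x x) →
      (∀ {x y}, ν x y → ν y x) → (∀ {x y z}, ν x y → ν y z → ν x z) →
      (∀ x y c, ν x y → c ∈ T → ν (x * c) (y * c)) →
      (∀ x y, σ.1 x y → ν x y) →
      ∃ G : Finset (S × S), (∀ p ∈ G, ν p.1 p.2) ∧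
        ∀ x y, ν x y → RnGen T (↑G) x y by
    refine h ⟨fun x y => x = y, ⟨⟨fun x => rfl, fun h => h.symm, fun h1 h2 => h1.trans h2⟩,
      fun x y c h => by rw [h]⟩⟩ ν hrefl (fun h => hsymm h) (fun h1 h2 => htrans h1 h2) hcomp
      (fun x y h => h ▸ hrefl x)
  intro σ₀
  refine (rnRCS_wf hS).induction (C := fun σ => ∀ ν : S → S → Prop, (∀ x, ν x x) →
      (∀ {x y}, ν x y → ν y x) → (∀ {x y z}, ν x y → ν y z → ν x z) →
      (∀ x y c, ν x y → c ∈ T → ν (x * c) (y * c)) →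
      (∀ x y, σ.1 x y → ν x y) →
      ∃ G : Finset (S × S), (∀ p ∈ G, ν p.1 p.2) ∧
        ∀ x y, ν x y → RnGen T (↑G) x y) σ₀ ?_
  clear σ₀
  intro σ IH ν hrefl hsymm htrans hcomp hσν
  by_cases hcase : ∀ x y, ν x y → σ.1 x y
  · -- here ν coincides with the right congruence σ, which is finitely generated
    obtain ⟨-, X, hX1, hX2⟩ := hS σ.1 σ.2
    refine ⟨X ∪ (hfin.toFinset ×ˢ X).image (fun q => (q.2.1 * q.1, q.2.2 * q.1)), ?_, ?_⟩
    · intro p hp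
      rcases Finset.mem_union.1 hp with hp | hp
      · exact hσν _ _ (hX1 p hp)
      · obtain ⟨⟨c, q⟩, hq, rfl⟩ := Finset.mem_image.1 hp
        have hcq := Finset.mem_product.1 hq
        exact hσν _ _ (σ.2.2 q.1 q.2 c (hX1 q hcq.2))
    · intro x y hxy
      have h1 : RnGen Set.univ (↑X : Set (S × S)) x y :=
        hX2 _ (isRightCongruence_rnGen _)
          (fun p hp => RnGen.base p.1 p.2 (Finset.mem_coe.2 hp)) x y (hcase x y hxy)
      refine rnGen_mono ?_ (rnGen_univ_le_mixed h1)
      rintro q hq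
      rcases hq with hq | ⟨p, hp, c, hc, h1', h2'⟩
      · exact Finset.mem_coe.2 (Finset.mem_union_left _ (Finset.mem_coe.1 hq))
      · refine Finset.mem_coe.2 (Finset.mem_union_right _ (Finset.mem_image.2
          ⟨(c, p), ?_, ?_⟩))
        · exact Finset.mem_product.2 ⟨hfin.mem_toFinset.2 hc, Finset.mem_coe.1 hp⟩
        · exact Prod.ext h1'.symm h2'.symm
  · push_neg at hcase
    obtain ⟨a, b, hab, hnab⟩ := hcase
    -- the right congruence generated by σ and the new pair (a, b)
    set σ' : RnRCS S := ⟨RnGen Set.univ ({p | σ.1 p.1 p.2} ∪ {(a, b)}),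
      isRightCongruence_rnGen _⟩ with hσ'def
    have hmemab : ((a, b) : S × S) ∈ ({p | σ.1 p.1 p.2} ∪ {(a, b)} : Set (S × S)) :=
      Or.inr rfl
    have hσlt : σ < σ' := by
      refine lt_of_le_not_ge (fun x y h => RnGen.base x y (Or.inl h)) ?_
      intro hle
      exact hnab (hle a b (RnGen.base a b hmemab))
    -- boundary translates of the pair (a, b)
    set Eab : Set (S × S) := {q | ∃ c, c ∉ T ∧ q.1 = a * c ∧ q.2 = b * c} with hEabdef
    have hσ'ν' : ∀ x y, σ'.1 x y → RnGen T ({q | ν q.1 q.2} ∪ Eab) x y := by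
      intro x y h
      refine rnGen_le RnGen.refl (fun h => h.symm) (fun h1 h2 => h1.trans h2)
        (fun _ _ c h hc => h.mul c hc) ?_ (rnGen_univ_le_mixed h)
      rintro p hp
      rcases hp with hp | ⟨q, hq, c, hc, h1, h2⟩
      · rcases hp with hp | hp
        · exact RnGen.base _ _ (Or.inl (hσν _ _ hp))
        · have hp' : p = (a, b) := hp
          subst hp'
          exact RnGen.base _ _ (Or.inl hab)
      · rcases hq with hq | hq
        · have hν : ν p.1 p.2 := by
            rw [h1, h2]; exact hσν _ _ (σ.2.2 q.1 q.2 c hq)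
          exact RnGen.base _ _ (Or.inl hν)
        · have hq' : q = (a, b) := hq
          subst hq'
          exact RnGen.base _ _ (Or.inr ⟨c, hc, h1, h2⟩)
    obtain ⟨Z, hZ1, hZ2⟩ := IH σ' hσlt (RnGen T ({q | ν q.1 q.2} ∪ Eab)) RnGen.refl
      (fun h => h.symm) (fun h1 h2 => h1.trans h2) (fun x y c h hc => h.mul c hc) hσ'ν'
    -- extract a finite set of ν-pairs sufficient to generate
    have haux : ∀ x y, RnGen T ({q | ν q.1 q.2} ∪ Eab) x y →
        ∃ A : Finset (S × S), (∀ p ∈ A, ν p.1 p.2) ∧ RnGen T (↑A ∪ Eab) x y := by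
      intro x y h
      induction h with
      | base a' b' h =>
        rcases h with h | h
        · refine ⟨{(a', b')}, ?_, RnGen.base a' b' (Or.inl (by simp))⟩
          intro p hp
          rcases Finset.mem_singleton.1 hp with rfl
          exact h
        · exact ⟨∅, by simp, RnGen.base a' b' (Or.inr h)⟩
      | refl a' => exact ⟨∅, by simp, RnGen.refl a'⟩
      | symm h ih =>
        obtain ⟨A, h1, h2⟩ := ih
        exact ⟨A, h1, h2.symm⟩
      | trans h1 h2 ih1 ih2 =>
        obtain ⟨A1, hA1, hg1⟩ := ih1
        obtain ⟨A2, hA2, hg2⟩ := ih2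
        refine ⟨A1 ∪ A2, fun p hp => ?_, RnGen.trans (rnGen_mono ?_ hg1) (rnGen_mono ?_ hg2)⟩
        · rcases Finset.mem_union.1 hp with h | h
          exacts [hA1 p h, hA2 p h]
        · exact fun q hq => hq.imp
            (fun h' => Finset.mem_coe.2 (Finset.mem_union_left _ (Finset.mem_coe.1 h'))) id
        · exact fun q hq => hq.imp
            (fun h' => Finset.mem_coe.2 (Finset.mem_union_right _ (Finset.mem_coe.1 h'))) id
      | mul c h hc ih =>
        obtain ⟨A, h1, h2⟩ := ih
        exact ⟨A, h1, h2.mul c hc⟩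
    have haux2 : ∀ W : Finset (S × S), (∀ p ∈ W, RnGen T ({q | ν q.1 q.2} ∪ Eab) p.1 p.2) →
        ∃ A : Finset (S × S), (∀ p ∈ A, ν p.1 p.2) ∧
          ∀ p ∈ W, RnGen T (↑A ∪ Eab) p.1 p.2 := by
      intro W
      induction W using Finset.induction_on with
      | empty => exact fun _ => ⟨∅, by simp, by simp⟩
      | @insert q W hq ih =>
        intro hW
        obtain ⟨A1, hA1, hg1⟩ := haux q.1 q.2 (hW q (Finset.mem_insert_self q W))
        obtain ⟨A2, hA2, hg2⟩ := ih (fun p hp => hW p (Finset.mem_insert_of_mem hp))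
        refine ⟨A1 ∪ A2, fun p hp => ?_, fun p hp => ?_⟩
        · rcases Finset.mem_union.1 hp with h | h
          exacts [hA1 p h, hA2 p h]
        · rcases Finset.mem_insert.1 hp with rfl | h
          · exact rnGen_mono (fun q' hq' => hq'.imp
              (fun h' => Finset.mem_coe.2 (Finset.mem_union_left _ (Finset.mem_coe.1 h'))) id) hg1
          · exact rnGen_mono (fun q' hq' => hq'.imp
              (fun h' => Finset.mem_coe.2 (Finset.mem_union_right _ (Finset.mem_coe.1 h'))) id)
              (hg2 p h)
    obtain ⟨A₀, hA₀ν, hA₀Z⟩ := haux2 Z hZ1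
    have hνle : ∀ x y, ν x y → RnGen T (↑A₀ ∪ Eab) x y := by
      intro x y h
      have h1 : RnGen T (↑Z) x y := hZ2 x y (RnGen.base x y (Or.inl h))
      exact rnGen_le RnGen.refl (fun h => h.symm) (fun h1 h2 => h1.trans h2)
        (fun _ _ c h hc => h.mul c hc) (fun p hp => hA₀Z p (Finset.mem_coe.1 hp)) h1
    -- the finite boundary vertex set and the associated ν-pairs
    set Vf : Finset S := hfin.toFinset.image (fun c => a * c) ∪
      hfin.toFinset.image (fun c => b * c) with hVfdef
    set Kf : Finset (S × S) := (Vf ×ˢ Vf).filter (fun p => ν p.1 p.2) with hKfdef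
    set G : Finset (S × S) := insert (a, b) (A₀ ∪ Kf) with hGdef
    have hGν : ∀ p ∈ G, ν p.1 p.2 := by
      intro p hp
      rcases Finset.mem_insert.1 hp with rfl | hp
      · exact hab
      · rcases Finset.mem_union.1 hp with h | h
        · exact hA₀ν p h
        · exact (Finset.mem_filter.1 h).2
    have habG : RnGen T (↑G) a b :=
      RnGen.base a b (Finset.mem_coe.2 (Finset.mem_insert_self _ _))
    -- the chain relation: κ-steps together with boundary links
    set link : S → S → Prop := fun x y => RnGen T (↑G) x y ∨
      (∃ c, c ∉ T ∧ x = a * c ∧ y = b * c) ∨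
      (∃ c, c ∉ T ∧ x = b * c ∧ y = a * c) with hlinkdef
    have hlinksymm : ∀ {x y}, link x y → link y x := by
      rintro x y (h | ⟨c, hc, h1, h2⟩ | ⟨c, hc, h1, h2⟩)
      · exact Or.inl h.symm
      · exact Or.inr (Or.inr ⟨c, hc, h2, h1⟩)
      · exact Or.inr (Or.inl ⟨c, hc, h2, h1⟩)
    have hLsymm : ∀ {x y}, Relation.ReflTransGen link x y →
        Relation.ReflTransGen link y x := by
      intro x y h
      induction h with
      | refl => exact Relation.ReflTransGen.refl
      | tail h1 h2 ih => exact (Relation.ReflTransGen.single (hlinksymm h2)).trans ih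
    have hlinkmul : ∀ x y t, link x y → t ∈ T → Relation.ReflTransGen link (x * t) (y * t) := by
      rintro x y t (h | ⟨c, hc, rfl, rfl⟩ | ⟨c, hc, rfl, rfl⟩) ht
      · exact Relation.ReflTransGen.single (Or.inl (h.mul t ht))
      · rw [mul_assoc, mul_assoc]
        by_cases hct : c * t ∈ T
        · exact Relation.ReflTransGen.single (Or.inl (habG.mul (c * t) hct))
        · exact Relation.ReflTransGen.single (Or.inr (Or.inl ⟨c * t, hct, rfl, rfl⟩))
      · rw [mul_assoc, mul_assoc]
        by_cases hct : c * t ∈ T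
        · exact Relation.ReflTransGen.single (Or.inl ((habG.mul (c * t) hct).symm))
        · exact Relation.ReflTransGen.single (Or.inr (Or.inr ⟨c * t, hct, rfl, rfl⟩))
    have hLmul : ∀ x y, Relation.ReflTransGen link x y → ∀ t, t ∈ T →
        Relation.ReflTransGen link (x * t) (y * t) := by
      intro x y h
      induction h with
      | refl => exact fun t ht => Relation.ReflTransGen.refl
      | tail h1 h2 ih => exact fun t ht => (ih t ht).trans (hlinkmul _ _ t h2 ht)
    have hνL : ∀ x y, ν x y → Relation.ReflTransGen link x y := by
      intro x y h
      refine rnGen_le (fun z => Relation.ReflTransGen.refl) (fun h => hLsymm h)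
        (fun h1 h2 => h1.trans h2) (fun x' y' c h hc => hLmul x' y' h c hc) ?_ (hνle x y h)
      rintro p (hp | ⟨c, hc, h1, h2⟩)
      · exact Relation.ReflTransGen.single (Or.inl (RnGen.base p.1 p.2
          (Finset.mem_coe.2 (Finset.mem_insert_of_mem (Finset.mem_union_left _
            (Finset.mem_coe.1 hp))))))
      · exact Relation.ReflTransGen.single (Or.inr (Or.inl ⟨c, hc, h1, h2⟩))
    have hQ : ∀ x y, Relation.ReflTransGen link x y → RnGen T (↑G) x y ∨
        ∃ u v, u ∈ Vf ∧ v ∈ Vf ∧ RnGen T (↑G) x u ∧ RnGen T (↑G) v y := by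
      intro x y h
      induction h with
      | refl => exact Or.inl (RnGen.refl x)
      | @tail w z h1 h2 ih =>
        rcases h2 with h2 | ⟨c, hc, rfl, rfl⟩ | ⟨c, hc, rfl, rfl⟩
        · rcases ih with ih | ⟨u, v, hu, hv, hxu, hvy⟩
          · exact Or.inl (ih.trans h2)
          · exact Or.inr ⟨u, v, hu, hv, hxu, hvy.trans h2⟩
        · have hmem2 : b * c ∈ Vf := Finset.mem_union_right _
            (Finset.mem_image.2 ⟨c, hfin.mem_toFinset.2 hc, rfl⟩)
          rcases ih with ih | ⟨u, v, hu, hv, hxu, hvy⟩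
          · have hmem1 : a * c ∈ Vf := Finset.mem_union_left _
              (Finset.mem_image.2 ⟨c, hfin.mem_toFinset.2 hc, rfl⟩)
            exact Or.inr ⟨a * c, b * c, hmem1, hmem2, ih, RnGen.refl _⟩
          · exact Or.inr ⟨u, b * c, hu, hmem2, hxu, RnGen.refl _⟩
        · have hmem2 : a * c ∈ Vf := Finset.mem_union_left _
            (Finset.mem_image.2 ⟨c, hfin.mem_toFinset.2 hc, rfl⟩)
          rcases ih with ih | ⟨u, v, hu, hv, hxu, hvy⟩
          · have hmem1 : b * c ∈ Vf := Finset.mem_union_right _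
              (Finset.mem_image.2 ⟨c, hfin.mem_toFinset.2 hc, rfl⟩)
            exact Or.inr ⟨b * c, a * c, hmem1, hmem2, ih, RnGen.refl _⟩
          · exact Or.inr ⟨u, a * c, hu, hmem2, hxu, RnGen.refl _⟩
    refine ⟨G, hGν, ?_⟩
    intro x y h
    rcases hQ x y (hνL x y h) with hk | ⟨u, v, hu, hv, hxu, hvy⟩
    · exact hk
    · have hκν : ∀ x' y', RnGen T (↑G) x' y' → ν x' y' := fun x' y' h' =>
        rnGen_le hrefl (fun h => hsymm h) (fun h1 h2 => htrans h1 h2) hcomp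
          (fun p hp => hGν p (Finset.mem_coe.1 hp)) h'
      have huv : ν u v := htrans (htrans (hsymm (hκν _ _ hxu)) h) (hsymm (hκν _ _ hvy))
      have hKmem : (u, v) ∈ Kf := Finset.mem_filter.2 ⟨Finset.mem_product.2 ⟨hu, hv⟩, huv⟩
      have huvG : RnGen T (↑G) u v := RnGen.base u v
        (Finset.mem_coe.2 (Finset.mem_insert_of_mem (Finset.mem_union_right _ hKmem)))
      exact hxu.trans (huvG.trans hvy)

end RnAux

theorem rightNoetherian_iff_cofinite_subsemigroup (S : Type*) [Semigroup S]
    (T : Set S) (hT : ∀ a ∈ T, ∀ b ∈ T, a * b ∈ T) (hfin : Tᶜ.Finite) :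
    RightNoetherian S ↔ RightNoetherianOn T := by
  classical
  constructor
  · -- hard direction: S right noetherian → T right noetherian
    intro hS r hr
    obtain ⟨hrefl, hsymm, htrans, hmem, hcomp⟩ := hr
    have hνrefl : ∀ x : S, r x x ∨ x = x := fun x => Or.inr rfl
    have hνsymm : ∀ {x y : S}, (r x y ∨ x = y) → (r y x ∨ y = x) := by
      rintro x y (h | rfl)
      exacts [Or.inl (hsymm x y h), Or.inr rfl]
    have hνtrans : ∀ {x y z : S}, (r x y ∨ x = y) → (r y z ∨ y = z) → (r x z ∨ x = z) := by
      rintro x y z (h1 | rfl) h2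
      · rcases h2 with h2 | rfl
        · exact Or.inl (htrans x y z h1 h2)
        · exact Or.inl h1
      · exact h2
    have hνcomp : ∀ x y c : S, (r x y ∨ x = y) → c ∈ T →
        (r (x * c) (y * c) ∨ x * c = y * c) := by
      rintro x y c (h | rfl) hc
      · exact Or.inl (hcomp x y c h hc)
      · exact Or.inr rfl
    obtain ⟨G, hG1, hG2⟩ := rnKey hfin hS (fun x y => r x y ∨ x = y)
      hνrefl hνsymm hνtrans hνcomp
    refine ⟨⟨hrefl, hsymm, htrans, hmem, hcomp⟩,
      G.filter (fun p => p.1 ≠ p.2), ?_, ?_⟩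
    · intro p hp
      obtain ⟨hpG, hne⟩ := Finset.mem_filter.1 hp
      rcases hG1 p hpG with h | h
      · exact h
      · exact absurd h hne
    · intro r' hr' hX x y hxy
      have h1 : RnGen T (↑G) x y := hG2 x y (Or.inl hxy)
      have h2 : r' x y ∨ x = y := by
        refine rnGen_le (r := fun x y => r' x y ∨ x = y) (fun x => Or.inr rfl) ?_ ?_ ?_ ?_ h1
        · rintro p q (h | rfl)
          exacts [Or.inl (hr'.2.1 p q h), Or.inr rfl]
        · rintro p q w (h1' | rfl) h2'
          · rcases h2' with h2' | rfl
            · exact Or.inl (hr'.2.2.1 p q w h1' h2')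
            · exact Or.inl h1'
          · exact h2'
        · rintro p q c (h | rfl) hc
          · exact Or.inl (hr'.2.2.2.2 p q c h hc)
          · exact Or.inr rfl
        · intro p hp
          by_cases hd : p.1 = p.2
          · exact Or.inr hd
          · exact Or.inl (hX p (Finset.mem_filter.2 ⟨Finset.mem_coe.1 hp, hd⟩))
      rcases h2 with h2 | heq
      · exact h2
      · subst heq
        exact hr'.1 x ((hmem x x hxy).1)
  · -- easy direction: T right noetherian → S right noetherian
    intro hTn r hr
    have hre := hr.1
    have hco := hr.2
    have hρTc : IsRightCongruenceOn T (fun x y => x ∈ T ∧ y ∈ T ∧ r x y) := by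
      refine ⟨fun x hx => ⟨hx, hx, hre.refl x⟩, fun x y h => ⟨h.2.1, h.1, hre.symm h.2.2⟩,
        fun x y z h1 h2 => ⟨h1.1, h2.2.1, hre.trans h1.2.2 h2.2.2⟩,
        fun x y h => ⟨h.1, h.2.1⟩, fun x y c h hc =>
          ⟨hT x h.1 c hc, hT y h.2.1 c hc, hco x y c h.2.2⟩⟩
    obtain ⟨-, XT, hXT1, hXT2⟩ := hTn _ hρTc
    set g : S → S × S := fun u => if h : ∃ t, t ∈ T ∧ r u t then (u, h.choose) else (u, u)
      with hgdef
    refine ⟨hr, XT ∪ (hfin.toFinset ×ˢ hfin.toFinset).filter (fun p => r p.1 p.2)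
      ∪ hfin.toFinset.image g, ?_, ?_⟩
    · intro p hp
      rcases Finset.mem_union.1 hp with hp | hp
      · rcases Finset.mem_union.1 hp with hp | hp
        · exact (hXT1 p hp).2.2
        · exact (Finset.mem_filter.1 hp).2
      · obtain ⟨u, hu, rfl⟩ := Finset.mem_image.1 hp
        by_cases h : ∃ t, t ∈ T ∧ r u t
        · have hg : g u = (u, h.choose) := by rw [hgdef]; exact dif_pos h
          rw [hg]
          exact h.choose_spec.2
        · have hg : g u = (u, u) := by rw [hgdef]; exact dif_neg h
          rw [hg]
          exact hre.refl u
    · intro r' hr' hX' x y hxy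
      have hT' : ∀ p q, p ∈ T → q ∈ T → r p q → r' p q := by
        intro p q hp hq hpq
        have key := hXT2 (fun u w => u ∈ T ∧ w ∈ T ∧ r' u w)
          ⟨fun u hu => ⟨hu, hu, hr'.1.refl u⟩, fun u w h => ⟨h.2.1, h.1, hr'.1.symm h.2.2⟩,
           fun u w z h1 h2 => ⟨h1.1, h2.2.1, hr'.1.trans h1.2.2 h2.2.2⟩,
           fun u w h => ⟨h.1, h.2.1⟩,
           fun u w c h hc => ⟨hT u h.1 c hc, hT w h.2.1 c hc, hr'.2 u w c h.2.2⟩⟩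
          (fun p' hp' => ⟨(hXT1 p' hp').1, (hXT1 p' hp').2.1,
            hX' p' (Finset.mem_union_left _ (Finset.mem_union_left _ hp'))⟩)
          p q ⟨hp, hq, hpq⟩
        exact key.2.2
      have hFT : ∀ u w, u ∉ T → w ∈ T → r u w → r' u w := by
        intro u w hu hw huw
        have hex : ∃ t, t ∈ T ∧ r u t := ⟨w, hw, huw⟩
        have hg : g u = (u, hex.choose) := by rw [hgdef]; exact dif_pos hex
        have hmem : g u ∈ XT ∪ (hfin.toFinset ×ˢ hfin.toFinset).filter (fun p => r p.1 p.2)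
            ∪ hfin.toFinset.image g :=
          Finset.mem_union_right _ (Finset.mem_image.2 ⟨u, hfin.mem_toFinset.2 hu, rfl⟩)
        have h1 : r' u hex.choose := by
          have := hX' (g u) hmem
          rwa [hg] at this
        have h2 : r' hex.choose w := hT' _ _ hex.choose_spec.1 hw
          (hre.trans (hre.symm hex.choose_spec.2) huw)
        exact hr'.1.trans h1 h2
      by_cases hx : x ∈ T <;> by_cases hy : y ∈ T
      · exact hT' x y hx hy hxy
      · exact hr'.1.symm (hFT y x hy hx (hre.symm hxy))
      · exact hFT x y hx hy hxy
      · exact hX' (x, y) (Finset.mem_union_left _ (Finset.mem_union_right _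
          (Finset.mem_filter.2 ⟨Finset.mem_product.2
            ⟨hfin.mem_toFinset.2 hx, hfin.mem_toFinset.2 hy⟩, hxy⟩)))
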